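/- Let ζ ∈ [0,1), k₀ = √((1−ζ)/(1+ζ)), and Φ(ζ,k) = (i/2)(k−1/k)ζ + (i/2)(k+1/k). Then for every nonzero complex k, Re Φ(ζ,k) = −(Im k)(|k|² − k₀²)/(|k|²(1 + k₀²)). In particular Re Φ(ζ,k) = 0 if k is real or |k| = k₀, Re Φ < 0 if Im k > 0 and |k| > k₀ or if Im k < 0 and |k| < k₀, and Re Φ > 0 otherwise. -/

import Mathlib

open Complex

/-- The stationary point `k₀(ζ) = √((1−ζ)/(1+ζ))`. -/
noncomputable def kzero (ζ : ℝ) : ℝ := Real.sqrt ((1 - ζ) / (1 + ζ))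

/-- The sine-Gordon phase function `Φ(ζ,k) = (i/2)(k − 1/k)ζ + (i/2)(k + 1/k)`. -/
noncomputable def Phi (ζ : ℝ) (k : ℂ) : ℂ :=
  (Complex.I / 2) * (k - 1 / k) * (ζ : ℂ) + (Complex.I / 2) * (k + 1 / k)

theorem stmt1 (ζ : ℝ) (hζ : ζ ∈ Set.Ico (0 : ℝ) 1) (k : ℂ) (hk : k ≠ 0) :
    (Phi ζ k).re =
      -(k.im) * (‖k‖ ^ 2 - kzero ζ ^ 2) /
        (‖k‖ ^ 2 * (1 + kzero ζ ^ 2)) ∧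
    ((k.im = 0 ∨ ‖k‖ = kzero ζ) → (Phi ζ k).re = 0) ∧
    (((0 < k.im ∧ kzero ζ < ‖k‖) ∨ (k.im < 0 ∧ ‖k‖ < kzero ζ)) →
      (Phi ζ k).re < 0) ∧
    (((0 < k.im ∧ ‖k‖ < kzero ζ) ∨ (k.im < 0 ∧ kzero ζ < ‖k‖)) →
      0 < (Phi ζ k).re) := by
  obtain ⟨h0, h1⟩ := hζ
  have hp : (0:ℝ) < 1 + ζ := by linarith
  have hm : (0:ℝ) < 1 - ζ := by linarith
  have hk0 : kzero ζ ^ 2 = (1 - ζ) / (1 + ζ) :=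
    Real.sq_sqrt (le_of_lt (div_pos hm hp))
  have hk0nn : 0 ≤ kzero ζ := Real.sqrt_nonneg _
  have habspos : 0 < ‖k‖ := norm_pos_iff.mpr hk
  have hns : Complex.normSq k ≠ 0 := (Complex.normSq_pos.mpr hk).ne'
  have habs : ‖k‖ ^ 2 = k.re ^ 2 + k.im ^ 2 := by
    rw [Complex.sq_norm, Complex.normSq_apply]; ring
  have hns' : Complex.normSq k = k.re ^ 2 + k.im ^ 2 := by
    rw [Complex.normSq_apply]; ring
  have hne : k.re ^ 2 + k.im ^ 2 ≠ 0 := by rw [← hns']; exact hns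
  have hden : 0 < ‖k‖ ^ 2 * (1 + kzero ζ ^ 2) := by positivity
  have hre : (Phi ζ k).re =
      -(k.im) * (‖k‖ ^ 2 - kzero ζ ^ 2) /
        (‖k‖ ^ 2 * (1 + kzero ζ ^ 2)) := by
    rw [habs, hk0]
    simp [Phi, Complex.div_re, Complex.div_im, Complex.add_re, Complex.add_im,
      Complex.mul_re, Complex.mul_im, Complex.normSq_apply, Complex.I_re, Complex.I_im]
    have hne3 : k.re * k.re + k.im * k.im ≠ 0 := by
      intro h; apply hne; rw [← h]; ring
    field_simp [hne3, hp.ne']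
    ring
  refine ⟨hre, ?_, ?_, ?_⟩
  · rintro (h | h) <;> rw [hre, h] <;> simp
  · rintro (⟨hb, hlt⟩ | ⟨hb, hlt⟩) <;> rw [hre]
    · apply div_neg_of_neg_of_pos _ hden
      have : kzero ζ ^ 2 < ‖k‖ ^ 2 := by nlinarith
      nlinarith
    · apply div_neg_of_neg_of_pos _ hden
      have : ‖k‖ ^ 2 < kzero ζ ^ 2 := by nlinarith [norm_nonneg k]
      nlinarith
  · rintro (⟨hb, hlt⟩ | ⟨hb, hlt⟩) <;> rw [hre]
    · apply div_pos _ hden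
      have : ‖k‖ ^ 2 < kzero ζ ^ 2 := by nlinarith [norm_nonneg k]
      nlinarith
    · apply div_pos _ hden
      have : kzero ζ ^ 2 < ‖k‖ ^ 2 := by nlinarith
      nlinarith
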